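/- Let P be a cd-structure on a category 𝒳. Then P is c-complete if and only if for every distinguished square of P with feet i : A → X and p : Y → X and every morphism f : X' → X in 𝒳, the pullback sieve f*⟨i,p⟩ on X' contains a simple P-cover. -/

import Mathlib

open CategoryTheory Limits Opposite

universe w v u

namespace CdFormal

variable {C : Type u} [Category.{v} C] {D : Type w} [Category.{v} D]

/-- A commutative square in `C`: `B → Y`, `B → A`, `p : Y → X`, `i : A → X`. -/
structure CDSquare (C : Type u) [Category.{v} C] where
  B : C
  A : C
  Y : C
  X : C
  e : B ⟶ A
  q : B ⟶ Y
  i : A ⟶ X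
  p : Y ⟶ X
  w : q ≫ p = e ≫ i

/-- The sieve on `X` generated by the feet `{i, p}` of a square. -/
def CDSquare.sieve (Q : CDSquare C) : Sieve Q.X where
  arrows Z g := (∃ h : Z ⟶ Q.A, g = h ≫ Q.i) ∨ (∃ h : Z ⟶ Q.Y, g = h ≫ Q.p)
  downward_closed := by
    rintro Z Z' g (⟨h, rfl⟩ | ⟨h, rfl⟩) g'
    · exact Or.inl ⟨g' ≫ h, by simp⟩
    · exact Or.inr ⟨g' ≫ h, by simp⟩

/-- The c-topology associated to a cd-structure `P`: the coarsest Grothendieck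
topology for which the sieve generated by the feet of each distinguished square is covering. -/
def cTopology (P : Set (CDSquare C)) : GrothendieckTopology C :=
  sInf {J | ∀ Q ∈ P, Q.sieve ∈ J Q.X}

/-- The class of simple `P`-covers. -/
inductive IsSimpleCover (P : Set (CDSquare C)) : (X : C) → Presieve X → Prop
  | iso {X' X : C} (f : X' ⟶ X) (hf : IsIso f) : IsSimpleCover P X (Presieve.singleton f)
  | glue (Q : CDSquare C) (hQ : Q ∈ P) (RY : Presieve Q.Y) (RA : Presieve Q.A)
      (hY : IsSimpleCover P Q.Y RY) (hA : IsSimpleCover P Q.A RA) :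
      IsSimpleCover P Q.X (fun Z g =>
        (∃ h : Z ⟶ Q.Y, RY h ∧ g = h ≫ Q.p) ∨ (∃ h : Z ⟶ Q.A, RA h ∧ g = h ≫ Q.i))

/-- `P` is c-complete: every covering sieve for the associated c-topology contains a
simple `P`-cover. -/
def IsCComplete (P : Set (CDSquare C)) : Prop :=
  ∀ ⦃X : C⦄ (S : Sieve X), S ∈ cTopology P X →
    ∃ R : Presieve X, IsSimpleCover P X R ∧ ∀ ⦃Z⦄ (g : Z ⟶ X), R g → S g

/-- `ρ(X)`: the sheafification of the presheaf represented by `X`. -/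
noncomputable def rho (J : GrothendieckTopology C) (X : C) : Sheaf J (Type (max u v)) :=
  (presheafToSheaf J _).obj (yoneda.obj X ⋙ uliftFunctor.{u})

/-- Functoriality of `ρ`. -/
noncomputable def rhoMap (J : GrothendieckTopology C) {X Y : C} (f : X ⟶ Y) :
    rho J X ⟶ rho J Y :=
  (presheafToSheaf J _).map (Functor.whiskerRight (yoneda.map f) uliftFunctor.{u})

lemma rhoMap_comp (J : GrothendieckTopology C) {X Y Z : C} (f : X ⟶ Y) (g : Y ⟶ Z) :
    rhoMap J (f ≫ g) = rhoMap J f ≫ rhoMap J g := by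
  rw [rhoMap, rhoMap, rhoMap, yoneda.map_comp, Functor.whiskerRight_comp, Functor.map_comp]
  rfl

instance instHasBinaryCoproductsSheafType (J : GrothendieckTopology C) :
    HasColimitsOfShape (Discrete WalkingPair) (Sheaf J (Type (max u v))) :=
  @Sheaf.instHasColimitsOfShape C _ J (Type (max u v)) _ (Discrete WalkingPair) _
    inferInstance inferInstance

/-- The canonical comparison morphism
`ρ(Y) ⊔ (ρ(B) ×_{ρ(A)} ρ(B)) ⟶ ρ(Y) ×_{ρ(X)} ρ(Y)` associated to a square. -/
noncomputable def regCompare (J : GrothendieckTopology C) (Q : CDSquare C) :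
    (rho J Q.Y) ⨿ (pullback (rhoMap J Q.e) (rhoMap J Q.e)) ⟶
      pullback (rhoMap J Q.p) (rhoMap J Q.p) :=
  coprod.desc (pullback.lift (𝟙 _) (𝟙 _) rfl)
    (pullback.lift (pullback.fst _ _ ≫ rhoMap J Q.q) (pullback.snd _ _ ≫ rhoMap J Q.q)
      (by
        rw [Category.assoc, Category.assoc, ← rhoMap_comp, Q.w, rhoMap_comp,
          ← Category.assoc, ← Category.assoc, pullback.condition]))

/-- `P` is c-regular. -/
def IsCRegular (P : Set (CDSquare C)) : Prop :=
  ∀ Q ∈ P, IsPullback Q.q Q.e Q.p Q.i ∧ Mono Q.i ∧ Epi (regCompare (cTopology P) Q)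

/-- The image of a square under a functor. -/
@[simps]
def CDSquare.map (F : C ⥤ D) (Q : CDSquare C) : CDSquare D where
  B := F.obj Q.B
  A := F.obj Q.A
  Y := F.obj Q.Y
  X := F.obj Q.X
  e := F.map Q.e
  q := F.map Q.q
  i := F.map Q.i
  p := F.map Q.p
  w := by rw [← F.map_comp, ← F.map_comp, Q.w]

/-- The induced cd-structure on a slice category. -/
def sliceCd (P : Set (CDSquare C)) (X : C) : Set (CDSquare (Over X)) :=
  {Q | Q.map (Over.forget X) ∈ P}

/-- A dimension function on a category: an initial object `empty` together with a
dimension taking the minimal value `bot` exactly on objects isomorphic to `empty`. -/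
structure DimensionFunction (C : Type u) [Category.{v} C] (Λ : Type w) [Preorder Λ] where
  empty : C
  init : Nonempty (IsInitial empty)
  dim : C → Λ
  bot : Λ
  bot_le : ∀ X : C, bot ≤ dim X
  dim_eq_bot_iff : ∀ X : C, dim X = bot ↔ Nonempty (X ≅ empty)

/-- A cd-structure is compatible with a dimension function. -/
def CompatibleWithDim {Λ : Type w} [Preorder Λ] (P : Set (CDSquare C))
    (Dm : DimensionFunction C Λ) : Prop :=
  ∃ P' : Set (CDSquare C), P' ⊆ P ∧
    (∀ Q ∈ P', Dm.dim Q.A ≤ Dm.dim Q.X ∧ Dm.dim Q.Y ≤ Dm.dim Q.X ∧ Dm.dim Q.B < Dm.dim Q.X) ∧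
    ∀ Q ∈ P, ∃ R : Presieve Q.X, IsSimpleCover P' Q.X R ∧
      ∀ ⦃Z⦄ (g : Z ⟶ Q.X), R g → Q.sieve g

end CdFormal


namespace CdFormal


variable {C : Type u} [Category.{v} C]

/-- A sieve hereditarily contains simple covers. -/
def GoodSieve (P : Set (CDSquare C)) {X : C} (S : Sieve X) : Prop :=
  ∀ ⦃X' : C⦄ (f : X' ⟶ X), ∃ R : Presieve X', IsSimpleCover P X' R ∧
    ∀ ⦃Z⦄ (g : Z ⟶ X'), R g → (S.pullback f) g

lemma GoodSieve.pullback {P : Set (CDSquare C)} {X : C} {S : Sieve X}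
    (hS : GoodSieve P S) {Y : C} (f : Y ⟶ X) : GoodSieve P (S.pullback f) := by
  intro X' g
  obtain ⟨R, hR, hle⟩ := hS (g ≫ f)
  exact ⟨R, hR, fun Z k hk => by
    have := hle k hk
    simpa [Sieve.pullback_apply, Category.assoc] using this⟩

lemma comp_good (P : Set (CDSquare C)) :
    ∀ {X' : C} {R₀ : Presieve X'}, IsSimpleCover P X' R₀ →
    ∀ (T : Sieve X'), (∀ ⦃Z⦄ (g : Z ⟶ X'), R₀ g → GoodSieve P (T.pullback g)) →
    ∃ R : Presieve X', IsSimpleCover P X' R ∧ ∀ ⦃Z⦄ (g : Z ⟶ X'), R g → T g := by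
  intro X' R₀ h
  induction h with
  | iso f hf =>
    intro T hd
    obtain ⟨R, hR, hle⟩ := hd f Presieve.singleton.mk (inv f)
    refine ⟨R, hR, fun Z g hg => ?_⟩
    have := hle g hg
    simpa [Sieve.pullback_apply, Category.assoc] using this
  | glue Q hQ RY RA hY hA ihY ihA =>
    intro T hd
    obtain ⟨RY', hY', hleY⟩ := ihY (T.pullback Q.p) (fun Z m hm => by
      rw [← Sieve.pullback_comp]
      exact hd (m ≫ Q.p) (Or.inl ⟨m, hm, rfl⟩))
    obtain ⟨RA', hA', hleA⟩ := ihA (T.pullback Q.i) (fun Z m hm => by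
      rw [← Sieve.pullback_comp]
      exact hd (m ≫ Q.i) (Or.inr ⟨m, hm, rfl⟩))
    refine ⟨_, IsSimpleCover.glue Q hQ RY' RA' hY' hA', ?_⟩
    rintro Z g (⟨h, hh, rfl⟩ | ⟨h, hh, rfl⟩)
    · exact hleY h hh
    · exact hleA h hh

/-- The topology of sieves hereditarily containing simple covers. -/
def goodTopology (P : Set (CDSquare C)) : GrothendieckTopology C where
  sieves X := {S | GoodSieve P S}
  top_mem' X := fun {X'} f =>
    ⟨Presieve.singleton (𝟙 X'), IsSimpleCover.iso _ inferInstance, fun Z g _ => trivial⟩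
  pullback_stable' X Y S f hS := hS.pullback f
  transitive' X S hS R hR := by
    intro X' f
    obtain ⟨R₀, hR₀, hle⟩ := hS f
    refine comp_good P hR₀ (R.pullback f) (fun Z g hg => ?_)
    have h1 : S (g ≫ f) := hle g hg
    rw [← Sieve.pullback_comp]
    exact hR h1

/-- A cd-structure `P` is c-complete if and only if for every distinguished square of `P`
with feet `i : A → X` and `p : Y → X` and every morphism `f : X' → X`, the pullback sieve
`f*⟨i,p⟩` on `X'` contains a simple `P`-cover. -/
theorem isCComplete_iff_pullback_contains_simple_cover
    {C : Type u} [Category.{v} C] (P : Set (CDSquare C)) :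
    IsCComplete P ↔
      ∀ Q ∈ P, ∀ {X' : C} (f : X' ⟶ Q.X),
        ∃ R : Presieve X', IsSimpleCover P X' R ∧
          ∀ ⦃Z⦄ (g : Z ⟶ X'), R g → (Q.sieve.pullback f) g := by
  constructor
  · intro hc Q hQ X' f
    have hmem : Q.sieve ∈ cTopology P Q.X := by
      rw [cTopology, GrothendieckTopology.mem_sInf]
      exact fun J hJ => hJ Q hQ
    exact hc _ ((cTopology P).pullback_stable f hmem)
  · intro H X S hS
    have hle : cTopology P ≤ goodTopology P :=
      sInf_le (fun Q hQ => fun {X'} f => H Q hQ f)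
    have hgood : GoodSieve P S := GrothendieckTopology.le_def.mp hle X hS
    obtain ⟨R, hR, hle'⟩ := hgood (𝟙 X)
    exact ⟨R, hR, fun Z g hg => by simpa using hle' g hg⟩

end CdFormal
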